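/- The optimal advance a*(R) = 1 - (-1+√(1+2R))/R is a concave function of R on (0, ∞): its second derivative is nonpositive. -/

import Mathlib

noncomputable def fF : ℝ → ℝ := fun R : ℝ => 1 - (-1 + Real.sqrt (1 + 2 * R)) / R

noncomputable def g1 : ℝ → ℝ := fun R : ℝ =>
  2 / (Real.sqrt (1 + 2 * R) * (1 + Real.sqrt (1 + 2 * R)) ^ 2)

lemma hasDerivAt_sqrt_lin {R : ℝ} (hR : 0 < R) :
    HasDerivAt (fun x : ℝ => Real.sqrt (1 + 2 * x))
      (2 * 1 / (2 * Real.sqrt (1 + 2 * R))) R := by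
  have h1 : HasDerivAt (fun x : ℝ => 1 + 2 * x) (2 * 1) R :=
    ((hasDerivAt_id R).const_mul 2).const_add 1
  exact h1.sqrt (by nlinarith)

lemma hasDerivAt_fF {R : ℝ} (hR : 0 < R) : HasDerivAt fF (g1 R) R := by
  have hspos : 0 < Real.sqrt (1 + 2 * R) := Real.sqrt_pos.mpr (by linarith)
  have hssq : (Real.sqrt (1 + 2 * R)) ^ 2 = 1 + 2 * R := Real.sq_sqrt (by linarith)
  set s := Real.sqrt (1 + 2 * R) with hs
  have hnum : HasDerivAt (fun x : ℝ => -1 + Real.sqrt (1 + 2 * x))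
      (2 * 1 / (2 * s)) R := (hasDerivAt_sqrt_lin hR).const_add (-1)
  have hdiv := hnum.div (hasDerivAt_id R) (ne_of_gt hR)
  have hfin : HasDerivAt fF
      (-((2 * 1 / (2 * s) * R - (-1 + s) * 1) / R ^ 2)) R := by
    exact hdiv.const_sub 1
  have heq : -((2 * 1 / (2 * s) * R - (-1 + s) * 1) / R ^ 2) = g1 R := by
    have h1 : (1 + s) ≠ 0 := by positivity
    rw [g1, ← hs]
    field_simp
    linear_combination (R + s + s ^ 2) * hssq
  rwa [heq] at hfin

lemma hasDerivAt_g1 {R : ℝ} (hR : 0 < R) :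
    HasDerivAt g1
      ((0 * (Real.sqrt (1 + 2 * R) * (1 + Real.sqrt (1 + 2 * R)) ^ 2) -
        2 * (2 * 1 / (2 * Real.sqrt (1 + 2 * R)) * (1 + Real.sqrt (1 + 2 * R)) ^ 2 +
          Real.sqrt (1 + 2 * R) *
            (↑2 * (1 + Real.sqrt (1 + 2 * R)) ^ 1 * (2 * 1 / (2 * Real.sqrt (1 + 2 * R)))))) /
        (Real.sqrt (1 + 2 * R) * (1 + Real.sqrt (1 + 2 * R)) ^ 2) ^ 2) R := by
  have hspos : 0 < Real.sqrt (1 + 2 * R) := Real.sqrt_pos.mpr (by linarith)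
  set s := Real.sqrt (1 + 2 * R) with hs
  have hu : HasDerivAt (fun x : ℝ => Real.sqrt (1 + 2 * x) * (1 + Real.sqrt (1 + 2 * x)) ^ 2)
      (2 * 1 / (2 * s) * (1 + s) ^ 2 +
        s * (↑2 * (1 + s) ^ 1 * (2 * 1 / (2 * s)))) R :=
    (hasDerivAt_sqrt_lin hR).mul (((hasDerivAt_sqrt_lin hR).const_add 1).pow 2)
  have hne : s * (1 + s) ^ 2 ≠ 0 := by positivity
  exact (hasDerivAt_const R (2 : ℝ)).div hu hne

lemma deriv2_nonpos {R : ℝ} (hR : 0 < R) : deriv (deriv fF) R ≤ 0 := by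
  have hmem : Set.Ioi (0:ℝ) ∈ nhds R := (isOpen_Ioi).mem_nhds hR
  have hev : deriv fF =ᶠ[nhds R] g1 :=
    Filter.eventuallyEq_of_mem hmem (fun x hx => (hasDerivAt_fF hx).deriv)
  rw [hev.deriv_eq, (hasDerivAt_g1 hR).deriv]
  have hspos : 0 < Real.sqrt (1 + 2 * R) := Real.sqrt_pos.mpr (by linarith)
  set s := Real.sqrt (1 + 2 * R) with hs
  apply div_nonpos_of_nonpos_of_nonneg
  · have h1 : 0 ≤ 2 * 1 / (2 * s) * (1 + s) ^ 2 + s * (↑2 * (1 + s) ^ 1 * (2 * 1 / (2 * s))) := by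
      positivity
    nlinarith
  · positivity

/-- The optimal advance `a*(R) = 1 - (-1+√(1+2R))/R` is concave on `(0,∞)`:
its second derivative is nonpositive there. -/
theorem stmt3 :
    ConcaveOn ℝ (Set.Ioi 0)
      (fun R : ℝ => 1 - (-1 + Real.sqrt (1 + 2 * R)) / R) ∧
    ∀ R : ℝ, 0 < R →
      deriv (deriv (fun R : ℝ => 1 - (-1 + Real.sqrt (1 + 2 * R)) / R)) R ≤ 0 := by
  have hkey : ∀ R : ℝ, 0 < R → deriv (deriv fF) R ≤ 0 := fun R hR => deriv2_nonpos hR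
  constructor
  · have hint : interior (Set.Ioi (0:ℝ)) = Set.Ioi 0 := interior_Ioi
    have hdiff : DifferentiableOn ℝ fF (Set.Ioi 0) :=
      fun x hx => ((hasDerivAt_fF hx).differentiableAt).differentiableWithinAt
    refine concaveOn_of_deriv2_nonpos (convex_Ioi 0) hdiff.continuousOn ?_ ?_ ?_
    · rw [hint]; exact hdiff
    · rw [hint]
      intro x hx
      have hmem : Set.Ioi (0:ℝ) ∈ nhds x := (isOpen_Ioi).mem_nhds hx
      have hev : deriv fF =ᶠ[nhds x] g1 :=
        Filter.eventuallyEq_of_mem hmem (fun y hy => (hasDerivAt_fF hy).deriv)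
      exact (((hasDerivAt_g1 hx).differentiableAt).congr_of_eventuallyEq
        hev).differentiableWithinAt
    · rw [hint]
      intro x hx
      exact hkey x hx
  · exact hkey
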